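/- Let d be a positive integer, m ∈ ℕ^d, p_B ∈ [1,∞), and E a normed vector space. Let H : [0,1]^d → E be constant on each cell of the anisotropic dyadic partition Π_m and satisfy ‖H(w)‖ ≤ 1 for all w. Then there is a constant C depending only on d and p_B such that for every coordinate j ∈ {1,…,d} and every τ ∈ (0,1]: ∫_{{w ∈ [0,1]^d : w + τe_j ∈ [0,1]^d}} ‖H(w + τe_j) − H(w)‖^{p_B} dw ≤ C · min{1, 2^{m_j} τ}. Consequently, for any s_j with 0 < s_j < 1/p_B, sup_{0 < τ ≤ 1} τ^{−s_j} ( ∫_{{w : w+τe_j ∈ [0,1]^d}} ‖H(w+τe_j) − H(w)‖^{p_B} dw )^{1/p_B} ≤ C′ · 2^{m_j s_j}, where C′ depends only on d, p_B, s_j. -/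

import Mathlib

open MeasureTheory
open scoped ENNReal

/-!
STATEMENT 11: Stepwise critics are anisotropic Besov–Nikolskii critics.
If `H : [0,1]^d → E` is constant on each cell of the anisotropic dyadic partition
`Π_m` and `‖H(w)‖ ≤ 1` on the cube, then for a constant `C = C(d, p_B)`,
`∫_{w, w+τe_j ∈ [0,1]^d} ‖H(w+τe_j) − H(w)‖^{p_B} dw ≤ C · min{1, 2^{m_j} τ}` for all
`τ ∈ (0,1]`, and consequently for `0 < s < 1/p_B`,
`τ^{−s} (∫ …)^{1/p_B} ≤ C' · 2^{m_j s}` uniformly over `τ ∈ (0,1]`, with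
`C' = C'(d, p_B, s)`.
-/

noncomputable def dyI (m k : ℕ) : Set ℝ :=
  if k + 1 = 2 ^ m then Set.Icc ((k : ℝ) / 2 ^ m) 1
  else Set.Ico ((k : ℝ) / 2 ^ m) (((k : ℝ) + 1) / 2 ^ m)

noncomputable def dyCell {d : ℕ} (m : Fin d → ℕ) (k : ∀ j, Fin (2 ^ m j)) :
    Set (Fin d → ℝ) :=
  {w | ∀ j, w j ∈ dyI (m j) (k j)}

/-- Translation by `τ` in coordinate `j`: `w ↦ w + τ e_j`. -/
def shiftCoord {d : ℕ} (j : Fin d) (τ : ℝ) (w : Fin d → ℝ) : Fin d → ℝ :=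
  fun i => if i = j then w i + τ else w i


namespace Stmt11Aux

open Set

noncomputable def dyIdx (m : ℕ) (x : ℝ) : ℕ := min ⌊(2:ℝ)^m * x⌋₊ (2^m - 1)

lemma dyIdx_lt (m : ℕ) (x : ℝ) : dyIdx m x < 2 ^ m := by
  have h : 0 < 2^m := Nat.two_pow_pos m
  exact lt_of_le_of_lt (min_le_right _ _) (by omega)

lemma dyIdx_mono (m : ℕ) {x y : ℝ} (h : x ≤ y) : dyIdx m x ≤ dyIdx m y := by
  unfold dyIdx
  have : (2:ℝ)^m * x ≤ (2:ℝ)^m * y :=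
    mul_le_mul_of_nonneg_left h (by positivity)
  exact min_le_min (Nat.floor_mono this) le_rfl

lemma mem_dyI_dyIdx {m : ℕ} {x : ℝ} (hx : x ∈ Icc (0:ℝ) 1) : x ∈ dyI m (dyIdx m x) := by
  obtain ⟨hx0, hx1⟩ := hx
  have h2 : (0:ℝ) < 2 ^ m := by positivity
  have h2n : 0 < 2^m := Nat.two_pow_pos m
  have hnn : 0 ≤ (2:ℝ)^m * x := by positivity
  by_cases h : dyIdx m x + 1 = 2 ^ m
  · rw [dyI, if_pos h]
    refine ⟨?_, hx1⟩
    have hk : dyIdx m x = 2^m - 1 := by omega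
    have hfl : 2^m - 1 ≤ ⌊(2:ℝ)^m * x⌋₊ := by
      by_contra hc
      push_neg at hc
      have h3 := min_le_left ⌊(2:ℝ)^m * x⌋₊ (2^m - 1)
      unfold dyIdx at hk
      omega
    have h1 : ((2^m - 1 : ℕ) : ℝ) ≤ (2:ℝ)^m * x :=
      le_trans (Nat.cast_le.2 hfl) (Nat.floor_le hnn)
    rw [hk, div_le_iff₀ h2]
    calc ((2^m - 1 : ℕ):ℝ) ≤ (2:ℝ)^m * x := h1
    _ = x * 2^m := by ring
  · rw [dyI, if_neg h]
    have hk : dyIdx m x = ⌊(2:ℝ)^m * x⌋₊ := by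
      rcases Nat.lt_or_ge ⌊(2:ℝ)^m * x⌋₊ (2^m - 1) with hlt | hge
      · exact min_eq_left (le_of_lt hlt)
      · exfalso
        have : dyIdx m x = 2^m - 1 := min_eq_right hge
        omega
    constructor
    · rw [div_le_iff₀ h2, hk]
      have h4 := Nat.floor_le hnn
      nlinarith
    · rw [lt_div_iff₀ h2, hk]
      have h5 := Nat.lt_floor_add_one ((2:ℝ)^m * x)
      nlinarith

noncomputable def badSet (m : ℕ) (τ : ℝ) : Set ℝ :=
  ⋃ k ∈ (Finset.Ico 1 (2^m) : Finset ℕ), Set.Ico ((k:ℝ)/2^m - τ) ((k:ℝ)/2^m)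

lemma measurableSet_badSet (m : ℕ) (τ : ℝ) : MeasurableSet (badSet m τ) :=
  (Finset.Ico 1 (2^m) : Finset ℕ).measurableSet_biUnion fun _ _ => measurableSet_Ico

lemma volume_badSet_le (m : ℕ) (τ : ℝ) :
    volume (badSet m τ) ≤ ENNReal.ofReal ((2:ℝ)^m * τ) := by
  calc volume (badSet m τ)
      ≤ ∑ k ∈ (Finset.Ico 1 (2^m) : Finset ℕ),
          volume (Set.Ico ((k:ℝ)/2^m - τ) ((k:ℝ)/2^m)) :=
        measure_biUnion_finset_le _ _
    _ = ∑ _k ∈ (Finset.Ico 1 (2^m) : Finset ℕ), ENNReal.ofReal τ := by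
        apply Finset.sum_congr rfl
        intro k _
        rw [Real.volume_Ico]
        norm_num
    _ = (2^m - 1) • ENNReal.ofReal τ := by rw [Finset.sum_const, Nat.card_Ico]
    _ ≤ ENNReal.ofReal ((2:ℝ)^m * τ) := by
        rw [nsmul_eq_mul, ENNReal.ofReal_mul (by positivity : (0:ℝ) ≤ (2:ℝ)^m)]
        have h1 : ((2^m - 1 : ℕ) : ℝ≥0∞) ≤ ENNReal.ofReal ((2:ℝ)^m) := by
          calc ((2^m - 1 : ℕ) : ℝ≥0∞) ≤ ((2^m : ℕ) : ℝ≥0∞) :=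
                Nat.cast_le.2 (Nat.sub_le _ _)
            _ = ENNReal.ofReal ((2:ℝ)^m) := by
                rw [← ENNReal.ofReal_natCast]
                norm_num
        exact mul_le_mul_left h1 _

lemma dyIdx_shift {m : ℕ} {x τ : ℝ} (hτ : 0 ≤ τ) (hx : x ∈ Icc (0:ℝ) 1)
    (hxτ : x + τ ∈ Icc (0:ℝ) 1) (hbad : x ∉ badSet m τ) :
    dyIdx m x = dyIdx m (x + τ) := by
  have hmono := dyIdx_mono m (by linarith : x ≤ x + τ)
  rcases eq_or_lt_of_le hmono with h | h
  · exact h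
  exfalso
  apply hbad
  set k := dyIdx m (x+τ) with hkdef
  have h2n : 0 < 2^m := Nat.two_pow_pos m
  have hk1 : 1 ≤ k := by omega
  have hk2 : k ≤ 2^m - 1 := min_le_right _ _
  have h2 : (0:ℝ) < 2^m := by positivity
  have hub : (k:ℝ)/2^m ≤ x + τ := by
    have ha : k ≤ ⌊(2:ℝ)^m * (x+τ)⌋₊ := min_le_left _ _
    have hb : ((k:ℕ):ℝ) ≤ (2:ℝ)^m*(x+τ) :=
      le_trans (Nat.cast_le.2 ha) (Nat.floor_le (mul_nonneg (by positivity) hxτ.1))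
    rw [div_le_iff₀ h2]
    nlinarith
  have hlb : x < (k:ℝ)/2^m := by
    have hfl : ⌊(2:ℝ)^m * x⌋₊ < k := by
      have h7 := min_le_right ⌊(2:ℝ)^m*x⌋₊ (2^m-1)
      unfold dyIdx at h
      omega
    have h8 : (2:ℝ)^m * x < k := by
      have := (Nat.floor_lt (mul_nonneg (by positivity) hx.1)).1 hfl
      exact_mod_cast this
    rw [lt_div_iff₀ h2]
    nlinarith
  have hkmem : k ∈ (Finset.Ico 1 (2^m) : Finset ℕ) := Finset.mem_Ico.2 ⟨hk1, by omega⟩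
  exact Set.mem_biUnion hkmem ⟨by linarith, hlb⟩

universe u

lemma key {d : ℕ} (pB : ℝ) (hpB : 1 ≤ pB) {E : Type u} [NormedAddCommGroup E]
    (m : Fin d → ℕ) (H : (Fin d → ℝ) → E)
    (hcell : ∀ k : (∀ j, Fin (2 ^ m j)), ∀ w ∈ dyCell m k, ∀ w' ∈ dyCell m k, H w = H w')
    (hbd : ∀ w : Fin d → ℝ, (∀ i, w i ∈ Set.Icc (0 : ℝ) 1) → ‖H w‖ ≤ 1)
    (j : Fin d) (τ : ℝ) (hτ : τ ∈ Set.Ioc (0 : ℝ) 1) :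
    (∫ w in {w : Fin d → ℝ | (∀ i, w i ∈ Set.Icc (0 : ℝ) 1) ∧
        (∀ i, shiftCoord j τ w i ∈ Set.Icc (0 : ℝ) 1)},
        ‖H (shiftCoord j τ w) - H w‖ ^ pB)
      ≤ (2:ℝ)^pB * min 1 ((2 : ℝ) ^ (m j) * τ) := by
  set S : Set (Fin d → ℝ) := {w : Fin d → ℝ | (∀ i, w i ∈ Set.Icc (0 : ℝ) 1) ∧
      (∀ i, shiftCoord j τ w i ∈ Set.Icc (0 : ℝ) 1)} with hSdef
  have hcube : MeasurableSet {w : Fin d → ℝ | ∀ i, w i ∈ Icc (0:ℝ) 1} := by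
    have : {w : Fin d → ℝ | ∀ i, w i ∈ Icc (0:ℝ) 1}
        = Set.pi univ (fun _ => Icc (0:ℝ) 1) := by
      ext w; simp only [Set.mem_setOf_eq, Set.mem_univ_pi]
    rw [this]
    exact MeasurableSet.univ_pi fun _ => measurableSet_Icc
  have hshift_meas : Measurable (shiftCoord j τ) := by
    apply measurable_pi_lambda
    intro i
    by_cases hi : i = j
    · simp only [shiftCoord, hi, if_pos rfl]
      exact (measurable_pi_apply j).add measurable_const
    · simp only [shiftCoord, if_neg hi]
      exact measurable_pi_apply i
  have hS : MeasurableSet S := by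
    have : S = {w : Fin d → ℝ | ∀ i, w i ∈ Icc (0:ℝ) 1}
        ∩ (shiftCoord j τ) ⁻¹' {w : Fin d → ℝ | ∀ i, w i ∈ Icc (0:ℝ) 1} := by
      ext w; simp [hSdef, Set.mem_preimage]
    rw [this]
    exact hcube.inter (hshift_meas hcube)
  have hvolS : volume S ≤ 1 := by
    have hsub : S ⊆ Set.pi univ (fun _ => Icc (0:ℝ) 1) := by
      intro w hw
      rw [Set.mem_univ_pi]
      exact hw.1
    calc volume S ≤ volume (Set.pi univ (fun _ : Fin d => Icc (0:ℝ) 1)) :=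
          measure_mono hsub
      _ = 1 := by
          rw [volume_pi_pi]
          simp [Real.volume_Icc]
  set A : Set (Fin d → ℝ) := {w : Fin d → ℝ | w j ∈ badSet (m j) τ} with hAdef
  have hA : MeasurableSet A := (measurableSet_badSet (m j) τ).preimage (measurable_pi_apply j)
  have hASsub : A ∩ S ⊆ Set.pi univ
      (fun i => if i = j then badSet (m j) τ ∩ Icc (0:ℝ) 1 else Icc (0:ℝ) 1) := by
    rintro w ⟨hwA, hwS⟩
    rw [Set.mem_univ_pi]
    intro i
    by_cases hi : i = j
    · subst hi
      simp only [if_pos rfl]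
      exact ⟨hwA, hwS.1 i⟩
    · simp only [if_neg hi]
      exact hwS.1 i
  have hvol2 : volume (A ∩ S) ≤ ENNReal.ofReal ((2:ℝ)^(m j) * τ) := by
    calc volume (A ∩ S) ≤ volume (Set.pi univ
          (fun i => if i = j then badSet (m j) τ ∩ Icc (0:ℝ) 1 else Icc (0:ℝ) 1)) :=
          measure_mono hASsub
      _ = ∏ i, volume (if i = j then badSet (m j) τ ∩ Icc (0:ℝ) 1 else Icc (0:ℝ) 1) :=
          volume_pi_pi _
      _ = ∏ i, (if i = j then volume (badSet (m j) τ ∩ Icc (0:ℝ) 1) else 1) := by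
          apply Finset.prod_congr rfl
          intro i _
          by_cases hi : i = j <;> simp [hi, Real.volume_Icc]
      _ = volume (badSet (m j) τ ∩ Icc (0:ℝ) 1) := by
          rw [Finset.prod_ite_eq' Finset.univ j (fun _ => volume (badSet (m j) τ ∩ Icc (0:ℝ) 1))]
          simp
      _ ≤ volume (badSet (m j) τ) := measure_mono Set.inter_subset_left
      _ ≤ ENNReal.ofReal ((2:ℝ)^(m j) * τ) := volume_badSet_le _ _
  have hvol1 : volume (A ∩ S) ≤ 1 :=
    le_trans (measure_mono Set.inter_subset_right) hvolS
  have htr : (volume (A ∩ S)).toReal ≤ min 1 ((2:ℝ)^(m j) * τ) := by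
    refine le_min ?_ ?_
    · exact ENNReal.toReal_le_of_le_ofReal (by norm_num) (by rwa [ENNReal.ofReal_one])
    · exact ENNReal.toReal_le_of_le_ofReal (mul_nonneg (by positivity) hτ.1.le) hvol2
  set c : ℝ := (2:ℝ)^pB with hcdef
  have hc : 0 ≤ c := by positivity
  have hpB0 : (0:ℝ) < pB := lt_of_lt_of_le one_pos hpB
  set g : (Fin d → ℝ) → ℝ := A.indicator (fun _ => c) with hgdef
  have hgint : Integrable g (volume.restrict S) := by
    have h1 : IntegrableOn (fun _ : Fin d → ℝ => c) S volume :=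
      integrableOn_const (lt_of_le_of_lt hvolS ENNReal.one_lt_top).ne
    exact h1.indicator hA
  have hf0 : 0 ≤ᵐ[volume.restrict S] fun w => ‖H (shiftCoord j τ w) - H w‖ ^ pB :=
    Filter.Eventually.of_forall fun w => Real.rpow_nonneg (norm_nonneg _) _
  have hfg : (fun w => ‖H (shiftCoord j τ w) - H w‖ ^ pB) ≤ᵐ[volume.restrict S] g := by
    rw [Filter.EventuallyLE, ae_restrict_iff' hS]
    refine Filter.Eventually.of_forall fun w hw => ?_
    obtain ⟨hw1, hw2⟩ := hw
    by_cases hb : w j ∈ badSet (m j) τ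
    · have hgw : g w = c := Set.indicator_of_mem (show w ∈ A from hb) fun _ => c
      rw [hgw, hcdef]
      apply Real.rpow_le_rpow (norm_nonneg _) ?_ hpB0.le
      calc ‖H (shiftCoord j τ w) - H w‖ ≤ ‖H (shiftCoord j τ w)‖ + ‖H w‖ := norm_sub_le _ _
        _ ≤ 1 + 1 := add_le_add (hbd _ hw2) (hbd _ hw1)
        _ = 2 := by norm_num
    · have heq : H (shiftCoord j τ w) = H w := by
        set kk : ∀ i, Fin (2 ^ m i) := fun i => ⟨dyIdx (m i) (w i), dyIdx_lt _ _⟩ with hkk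
        have hw_mem : w ∈ dyCell m kk := fun i => mem_dyI_dyIdx (hw1 i)
        have hs_mem : shiftCoord j τ w ∈ dyCell m kk := by
          intro i
          by_cases hi : i = j
          · subst hi
            have hsh : shiftCoord i τ w i = w i + τ := by simp [shiftCoord]
            have hwτ : w i + τ ∈ Icc (0:ℝ) 1 := by
              have := hw2 i; rwa [hsh] at this
            have hidx : dyIdx (m i) (w i) = dyIdx (m i) (w i + τ) :=
              dyIdx_shift hτ.1.le (hw1 i) hwτ hb
            show shiftCoord i τ w i ∈ dyI (m i) (kk i)
            rw [hsh]
            have : ((kk i : ℕ)) = dyIdx (m i) (w i + τ) := by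
              simp [hkk, hidx]
            rw [this]
            exact mem_dyI_dyIdx hwτ
          · have hsh : shiftCoord j τ w i = w i := by simp [shiftCoord, hi]
            show shiftCoord j τ w i ∈ dyI (m i) (kk i)
            rw [hsh]
            exact hw_mem i
        exact hcell kk _ hs_mem _ hw_mem
      have : ‖H (shiftCoord j τ w) - H w‖ ^ pB = 0 := by
        rw [heq, sub_self, norm_zero, Real.zero_rpow hpB0.ne']
      rw [this]
      exact Set.indicator_nonneg (fun _ _ => hc) w
  calc (∫ w in S, ‖H (shiftCoord j τ w) - H w‖ ^ pB)
      ≤ ∫ w in S, g w := integral_mono_of_nonneg hf0 hgint hfg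
    _ = (volume (A ∩ S)).toReal • c := by
        rw [hgdef, integral_indicator hA, setIntegral_const, measureReal_restrict_apply hA, measureReal_def]
    _ ≤ (2:ℝ)^pB * min 1 ((2 : ℝ) ^ (m j) * τ) := by
        rw [smul_eq_mul, mul_comm]
        apply mul_le_mul_of_nonneg_left htr hc

end Stmt11Aux

theorem stmt11.{u} (d : ℕ) (hd : 0 < d) (pB : ℝ) (hpB : 1 ≤ pB) :
    (∃ C : ℝ, ∀ (E : Type u) (_ : NormedAddCommGroup E), ∀ (_ : NormedSpace ℝ E),
      ∀ (m : Fin d → ℕ) (H : (Fin d → ℝ) → E),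
      (∀ k : (∀ j, Fin (2 ^ m j)), ∀ w ∈ dyCell m k, ∀ w' ∈ dyCell m k, H w = H w') →
      (∀ w : Fin d → ℝ, (∀ i, w i ∈ Set.Icc (0 : ℝ) 1) → ‖H w‖ ≤ 1) →
      ∀ (j : Fin d) (τ : ℝ), τ ∈ Set.Ioc (0 : ℝ) 1 →
      (∫ w in {w : Fin d → ℝ | (∀ i, w i ∈ Set.Icc (0 : ℝ) 1) ∧
          (∀ i, shiftCoord j τ w i ∈ Set.Icc (0 : ℝ) 1)},
          ‖H (shiftCoord j τ w) - H w‖ ^ pB)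
        ≤ C * min 1 ((2 : ℝ) ^ (m j) * τ)) ∧
    (∀ s : ℝ, 0 < s → s < 1 / pB →
      ∃ C' : ℝ, ∀ (E : Type u) (_ : NormedAddCommGroup E), ∀ (_ : NormedSpace ℝ E),
      ∀ (m : Fin d → ℕ) (H : (Fin d → ℝ) → E),
      (∀ k : (∀ j, Fin (2 ^ m j)), ∀ w ∈ dyCell m k, ∀ w' ∈ dyCell m k, H w = H w') →
      (∀ w : Fin d → ℝ, (∀ i, w i ∈ Set.Icc (0 : ℝ) 1) → ‖H w‖ ≤ 1) →
      ∀ (j : Fin d) (τ : ℝ), τ ∈ Set.Ioc (0 : ℝ) 1 →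
      τ ^ (-s) *
        (∫ w in {w : Fin d → ℝ | (∀ i, w i ∈ Set.Icc (0 : ℝ) 1) ∧
            (∀ i, shiftCoord j τ w i ∈ Set.Icc (0 : ℝ) 1)},
            ‖H (shiftCoord j τ w) - H w‖ ^ pB) ^ (1 / pB)
        ≤ C' * ((2 : ℝ) ^ (m j)) ^ s) := by
  constructor
  · refine ⟨(2:ℝ)^pB, ?_⟩
    intro E _ _ m H hcell hbd j τ hτ
    exact Stmt11Aux.key pB hpB m H hcell hbd j τ hτ
  · intro s hs0 hs
    refine ⟨((2:ℝ)^pB) ^ (1/pB), ?_⟩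
    intro E _ _ m H hcell hbd j τ hτ
    have hkey := Stmt11Aux.key pB hpB m H hcell hbd j τ hτ
    set I := ∫ w in {w : Fin d → ℝ | (∀ i, w i ∈ Set.Icc (0 : ℝ) 1) ∧
        (∀ i, shiftCoord j τ w i ∈ Set.Icc (0 : ℝ) 1)},
        ‖H (shiftCoord j τ w) - H w‖ ^ pB with hIdef
    have hI0 : 0 ≤ I := by
      rw [hIdef]
      exact integral_nonneg fun w => Real.rpow_nonneg (norm_nonneg _) _
    have hτ0 : (0:ℝ) < τ := hτ.1
    set M : ℝ := min 1 ((2:ℝ)^(m j) * τ) with hMdef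
    have hM0 : 0 < M := lt_min one_pos (by positivity)
    have hM1 : M ≤ 1 := min_le_left _ _
    have hpB0 : (0:ℝ) < pB := lt_of_lt_of_le one_pos hpB
    have h1pB : (0:ℝ) < 1/pB := by positivity
    have hτs : (0:ℝ) ≤ τ ^ (-s) := Real.rpow_nonneg hτ0.le _
    have hCn : (0:ℝ) ≤ ((2:ℝ)^pB) ^ (1/pB) := Real.rpow_nonneg (by positivity) _
    calc τ ^ (-s) * I ^ (1/pB)
        ≤ τ ^ (-s) * (((2:ℝ)^pB * M) ^ (1/pB)) := by
          apply mul_le_mul_of_nonneg_left (Real.rpow_le_rpow hI0 hkey h1pB.le) hτs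
      _ = τ ^ (-s) * (((2:ℝ)^pB) ^ (1/pB) * M ^ (1/pB)) := by
          rw [Real.mul_rpow (by positivity) hM0.le]
      _ ≤ τ ^ (-s) * (((2:ℝ)^pB) ^ (1/pB) * M ^ s) := by
          have h := Real.rpow_le_rpow_of_exponent_ge hM0 hM1 (le_of_lt hs)
          exact mul_le_mul_of_nonneg_left (mul_le_mul_of_nonneg_left h hCn) hτs
      _ ≤ τ ^ (-s) * (((2:ℝ)^pB) ^ (1/pB) * (((2:ℝ)^(m j)) * τ) ^ s) := by
          have h := Real.rpow_le_rpow hM0.le (min_le_right 1 ((2:ℝ)^(m j) * τ)) hs0.le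
          exact mul_le_mul_of_nonneg_left (mul_le_mul_of_nonneg_left h hCn) hτs
      _ = ((2:ℝ)^pB) ^ (1/pB) * ((2:ℝ)^(m j)) ^ s * (τ ^ (-s) * τ ^ s) := by
          rw [Real.mul_rpow (by positivity) hτ0.le]
          ring
      _ = ((2:ℝ)^pB) ^ (1/pB) * ((2:ℝ)^(m j)) ^ s := by
          rw [← Real.rpow_add hτ0]
          norm_num
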